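/- Let f(x) = (1/σ)(1+κx/σ)^(-(1+κ)/κ) on x ≥ 0 with κ > 0, σ > 0. The independent-equals first moment ∫_0^∞ x f(x)^q dx / ∫_0^∞ f(x)^q dx with q = 1 + κ/(1+κ) equals σ. -/

import Mathlib

noncomputable def cexpDensity (σ κ x : ℝ) : ℝ :=
  (1 / σ) * (1 + κ * x / σ) ^ (-((1 + κ) / κ))

open MeasureTheory Set Real

lemma shift_Ioi (f : ℝ → ℝ) (a c : ℝ) :
    ∫ x in Ioi a, f (x + c) = ∫ x in Ioi (a + c), f x := by
  rw [← integral_indicator measurableSet_Ioi, ← integral_indicator measurableSet_Ioi,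
    ← integral_add_right_eq_self (μ := volume) ((Ioi (a + c)).indicator f) c]
  congr 1
  ext x
  by_cases h : a < x
  · simp [indicator_apply, mem_Ioi, h]
  · simp [indicator_apply, mem_Ioi, h]

lemma int_den {a c : ℝ} (ha : a < -1) (hc : 0 < c) :
    ∫ x in Ioi (0 : ℝ), (1 + c * x) ^ a = c⁻¹ * (-1 / (a + 1)) := by
  have h := integral_comp_mul_left_Ioi (fun y => (y + 1) ^ a) 0 hc
  simp only [mul_zero, smul_eq_mul] at h
  have h2 : ∫ x in Ioi (0 : ℝ), (x + 1) ^ a = ∫ x in Ioi (1 : ℝ), x ^ a := by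
    have := shift_Ioi (fun u => u ^ a) 0 1
    simpa using this
  have h3 : (∫ x in Ioi (0 : ℝ), (1 + c * x) ^ a) = ∫ x in Ioi (0 : ℝ),
      (fun y => (y + 1) ^ a) (c * x) := by
    congr 1; ext x; ring_nf
  rw [h3, h, h2, integral_Ioi_rpow_of_lt ha one_pos, Real.one_rpow]

lemma int_num {a c : ℝ} (ha : a < -2) (hc : 0 < c) :
    ∫ x in Ioi (0 : ℝ), x * (1 + c * x) ^ a
      = c⁻¹ * c⁻¹ * (-1 / (a + 2) - -1 / (a + 1)) := by
  have ha1 : a + 1 < -1 := by linarith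
  have ha2 : a < -1 := by linarith
  have h := integral_comp_mul_left_Ioi (fun y => y / c * (y + 1) ^ a) 0 hc
  simp only [mul_zero, smul_eq_mul] at h
  have h3 : (∫ x in Ioi (0 : ℝ), x * (1 + c * x) ^ a) = ∫ x in Ioi (0 : ℝ),
      (fun y => y / c * (y + 1) ^ a) (c * x) := by
    refine setIntegral_congr_fun measurableSet_Ioi fun x _ => ?_
    simp only
    have hx : c * (x / c) = x := by field_simp
    rw [mul_div_assoc, hx, add_comm (c * x) 1]
  have h2 : ∫ y in Ioi (0 : ℝ), y / c * (y + 1) ^ a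
      = ∫ u in Ioi (1 : ℝ), (u - 1) / c * u ^ a := by
    have := shift_Ioi (fun u => (u - 1) / c * u ^ a) 0 1
    simpa using this
  have h4 : ∫ u in Ioi (1 : ℝ), (u - 1) / c * u ^ a
      = c⁻¹ * ∫ u in Ioi (1 : ℝ), (u ^ (a + 1) - u ^ a) := by
    rw [← integral_const_mul]
    refine setIntegral_congr_fun measurableSet_Ioi fun u hu => ?_
    have hu0 : (0 : ℝ) < u := lt_trans one_pos hu
    rw [rpow_add_one hu0.ne']
    field_simp
  have hi1 : IntegrableOn (fun u : ℝ => u ^ (a + 1)) (Ioi 1) :=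
    integrableOn_Ioi_rpow_of_lt ha1 one_pos
  have hi2 : IntegrableOn (fun u : ℝ => u ^ a) (Ioi 1) :=
    integrableOn_Ioi_rpow_of_lt ha2 one_pos
  rw [h3, h, h2, h4, integral_sub hi1 hi2, integral_Ioi_rpow_of_lt ha1 one_pos,
    integral_Ioi_rpow_of_lt ha2 one_pos, Real.one_rpow, Real.one_rpow]
  ring_nf

theorem independent_equals_moment (σ κ : ℝ) (hσ : 0 < σ) (hκ : 0 < κ) :
    (∫ x in Set.Ioi (0 : ℝ), x * (cexpDensity σ κ x) ^ (1 + κ / (1 + κ))) /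
        (∫ x in Set.Ioi (0 : ℝ), (cexpDensity σ κ x) ^ (1 + κ / (1 + κ))) = σ := by
  set q : ℝ := 1 + κ / (1 + κ) with hq
  have h1κ : (0 : ℝ) < 1 + κ := by linarith
  set a : ℝ := -((1 + κ) / κ) * q with haa
  have ha_eq : a = -((1 + 2 * κ) / κ) := by
    rw [haa, hq]; field_simp; ring
  have ha1 : a + 1 = -((1 + κ) / κ) := by rw [ha_eq]; field_simp; try ring
  have ha2 : a + 2 = -(1 / κ) := by rw [ha_eq]; field_simp; try ring
  have ha_lt2 : a < -2 := by
    rw [ha_eq]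
    have : (2 : ℝ) < (1 + 2 * κ) / κ := by
      rw [lt_div_iff₀ hκ]; linarith
    linarith
  have ha_lt1 : a < -1 := by linarith
  set c : ℝ := κ / σ with hc
  have hc0 : (0 : ℝ) < c := div_pos hκ hσ
  -- rewrite integrands
  have key : ∀ x ∈ Ioi (0 : ℝ), (cexpDensity σ κ x) ^ q
      = (1 / σ) ^ q * (1 + c * x) ^ a := by
    intro x hx
    have hx0 : (0 : ℝ) < x := hx
    have hb : (0 : ℝ) < 1 + c * x := by positivity
    have hbase : 1 + κ * x / σ = 1 + c * x := by rw [hc]; ring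
    rw [cexpDensity, hbase, Real.mul_rpow (by positivity) (Real.rpow_nonneg hb.le _),
      ← Real.rpow_mul hb.le]
  have hnum : (∫ x in Ioi (0 : ℝ), x * (cexpDensity σ κ x) ^ q)
      = (1 / σ) ^ q * (c⁻¹ * c⁻¹ * (-1 / (a + 2) - -1 / (a + 1))) := by
    rw [← int_num ha_lt2 hc0, ← integral_const_mul]
    refine setIntegral_congr_fun measurableSet_Ioi fun x hx => ?_
    rw [key x hx]; ring
  have hden : (∫ x in Ioi (0 : ℝ), (cexpDensity σ κ x) ^ q)
      = (1 / σ) ^ q * (c⁻¹ * (-1 / (a + 1))) := by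
    rw [← int_den ha_lt1 hc0, ← integral_const_mul]
    refine setIntegral_congr_fun measurableSet_Ioi fun x hx => ?_
    rw [key x hx]
  have hpow : (0 : ℝ) < (1 / σ) ^ q := Real.rpow_pos_of_pos (by positivity) _
  have hne : (-1 - κ : ℝ) ≠ 0 := by linarith
  rw [hnum, hden, ha1, ha2, mul_div_mul_left _ _ hpow.ne', hc]
  field_simp [hne]
  have ht : (-1 - κ : ℝ) * (-1 - κ)⁻¹ = 1 := mul_inv_cancel₀ hne
  ring
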